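/- Let μ ≥ 2 be an even integer, W a positive integer, K = μW + 1, and ψ ∈ (0, 2π) a phase with (3/4 − ψ/(2π))·μ not an integer. Then the sum of the positive in-phase channel coefficients over all ports equals W times a consecutive-index sum: Σ_{k ∈ K₁(ψ)} cos(ψ + (2π/μ)(k−1)) = W · Σ_{k = k_low}^{k_up} cos(ψ + (2π/μ)(k−1)), where k_low = ⌈(3/4 − ψ/(2π))μ⌉ + 1 and k_up = ⌊(5/4 − ψ/(2π))μ⌋ + 1. -/

import Mathlib

open Real Finset
open scoped Classical

lemma my_sum_Ioc_consecutive (f : ℤ → ℝ) {m n k : ℤ} (h1 : m ≤ n) (h2 : n ≤ k) :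
    (∑ i ∈ Finset.Ioc m n, f i) + ∑ i ∈ Finset.Ioc n k, f i = ∑ i ∈ Finset.Ioc m k, f i := by
  rw [← Finset.sum_union, Finset.Ioc_union_Ioc_eq_Ioc h1 h2]
  rw [Finset.disjoint_left]
  intro x hx hx'
  simp only [Finset.mem_Ioc] at hx hx'
  omega

lemma shift_step (μ : ℕ) (hμ : 1 ≤ μ) (h : ℤ → ℝ) (hp : ∀ k : ℤ, h (k + μ) = h k) (b : ℤ) :
    ∑ k ∈ Finset.Ioc (b+1) (b+1+μ), h k = ∑ k ∈ Finset.Ioc b (b+μ), h k := by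
  have h1 : (∑ k ∈ Finset.Ioc b (b+1), h k) + ∑ k ∈ Finset.Ioc (b+1) (b+μ), h k
      = ∑ k ∈ Finset.Ioc b (b+μ), h k :=
    my_sum_Ioc_consecutive h (show b ≤ b+1 by omega) (show (b:ℤ)+1 ≤ b+μ by omega)
  have h2 : (∑ k ∈ Finset.Ioc (b+1) (b+μ), h k) + ∑ k ∈ Finset.Ioc (b+μ) (b+1+μ), h k
      = ∑ k ∈ Finset.Ioc (b+1) (b+1+μ), h k :=
    my_sum_Ioc_consecutive h (show (b:ℤ)+1 ≤ b+μ by omega) (show (b:ℤ)+μ ≤ b+1+μ by omega)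
  have e1 : Finset.Ioc b (b+1) = {b+1} := by ext x; simp [Finset.mem_Ioc]; omega
  have e2 : Finset.Ioc (b+μ) (b+1+μ) = {b+1+μ} := by ext x; simp [Finset.mem_Ioc]; omega
  have e3 : h (b+1+μ) = h (b+1) := hp (b+1)
  rw [e1, Finset.sum_singleton] at h1
  rw [e2, Finset.sum_singleton, e3] at h2
  linarith

lemma period_sum_const (μ : ℕ) (hμ : 1 ≤ μ) (h : ℤ → ℝ) (hp : ∀ k : ℤ, h (k + μ) = h k)
    (b : ℤ) : ∑ k ∈ Finset.Ioc b (b+μ), h k = ∑ k ∈ Finset.Ioc 0 ((0:ℤ)+μ), h k := by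
  induction b using Int.induction_on with
  | zero => rfl
  | succ i ih => rw [shift_step μ hμ h hp i]; exact ih
  | pred i ih =>
    have := shift_step μ hμ h hp (-(i:ℤ)-1)
    rw [show (-(i:ℤ)-1+1) = -(i:ℤ) by ring] at this
    rw [← this]; exact ih

lemma blocks_sum (μ : ℕ) (hμ : 1 ≤ μ) (h : ℤ → ℝ) (hp : ∀ k : ℤ, h (k + μ) = h k) (W : ℕ) :
    ∑ k ∈ Finset.Ioc (1:ℤ) (1 + μ*W), h k = W * ∑ k ∈ Finset.Ioc (1:ℤ) (1+μ), h k := by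
  induction W with
  | zero => simp
  | succ n ih =>
    have hsplit := my_sum_Ioc_consecutive h (show (1:ℤ) ≤ 1 + μ*n by nlinarith [Int.natCast_nonneg μ, Int.natCast_nonneg n])
      (show (1:ℤ) + μ*n ≤ 1 + μ*n + μ by omega)
    have hlast : ∑ k ∈ Finset.Ioc ((1:ℤ)+μ*n) (1+μ*n+μ), h k
        = ∑ k ∈ Finset.Ioc (1:ℤ) (1+μ), h k := by
      rw [period_sum_const μ hμ h hp (1+μ*n), period_sum_const μ hμ h hp 1]
    have hcast : (1:ℤ) + μ*(n+1 : ℕ) = 1 + μ*n + μ := by push_cast; ring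
    rw [hcast, ← hsplit, hlast, ih]
    push_cast; ring

/-- Lemma 1: the sum of the positive in-phase channel coefficients over all ports
equals `W` times a consecutive-index sum. -/
theorem cuma_signal_sum_eq_window_sum (μ W : ℕ) (hμ2 : 2 ≤ μ) (hμe : Even μ) (hW : 1 ≤ W)
    (ψ : ℝ) (hψ0 : 0 < ψ) (hψ2 : ψ < 2 * π)
    (hni : ∀ n : ℤ, (3 / 4 - ψ / (2 * π)) * μ ≠ (n : ℝ)) :
    ∑ k ∈ (Finset.Icc 2 (μ * W + 1)).filter
        (fun k => 0 < Real.cos (ψ + 2 * π / μ * ((k : ℝ) - 1))),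
      Real.cos (ψ + 2 * π / μ * ((k : ℝ) - 1))
      = (W : ℝ) *
        ∑ k ∈ Finset.Icc (⌈(3 / 4 - ψ / (2 * π)) * μ⌉ + 1)
            (⌊(5 / 4 - ψ / (2 * π)) * μ⌋ + 1),
          Real.cos (ψ + 2 * π / μ * ((k : ℝ) - 1)) := by
  have hπ : (0:ℝ) < π := Real.pi_pos
  have hμR : (0:ℝ) < μ := by exact_mod_cast (by omega : 0 < μ)
  have hμne : (μ:ℝ) ≠ 0 := ne_of_gt hμR
  obtain ⟨m, hm⟩ := hμe
  have hm1 : 1 ≤ m := by omega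
  have hmr : (μ:ℝ) = 2*m := by rw [hm]; push_cast; ring
  set a : ℝ := (3 / 4 - ψ / (2 * π)) * μ with ha
  set b : ℝ := (5 / 4 - ψ / (2 * π)) * μ with hb
  set g : ℤ → ℝ := fun k => Real.cos (ψ + 2 * π / μ * ((k : ℝ) - 1)) with hg
  set h : ℤ → ℝ := fun k => if 0 < g k then g k else 0 with hh
  have hc0 : (0:ℝ) < 2*π/μ := by positivity
  -- periodicity
  have hgp : ∀ k : ℤ, g (k + μ) = g k := by
    intro k
    have harg : ψ + 2 * π / μ * (((k:ℝ) + μ) - 1) = (ψ + 2 * π / μ * ((k:ℝ) - 1)) + 2*π := by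
      field_simp; ring
    simp only [hg]
    push_cast
    rw [harg, Real.cos_add_two_pi]
  have hhp : ∀ k : ℤ, h (k + μ) = h k := by
    intro k; simp only [hh, hgp k]
  -- floor/ceil facts
  have hafl : ((⌊a⌋:ℝ)) < a := lt_of_le_of_ne (Int.floor_le a) (fun e => hni ⌊a⌋ e.symm)
  have hafu : a < (⌊a⌋:ℝ) + 1 := Int.lt_floor_add_one a
  have hceil : ⌈a⌉ = ⌊a⌋ + 1 := by
    have h2 : ⌈a⌉ ≤ ⌊a⌋ + 1 := Int.ceil_le_floor_add_one a
    have h3 : ((⌊a⌋:ℝ)) < ⌈a⌉ := lt_of_lt_of_le hafl (Int.le_ceil a)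
    have h4 : ⌊a⌋ < ⌈a⌉ := by exact_mod_cast h3
    omega
  have hba : b = a + (m:ℝ) := by rw [ha, hb, hmr]; ring
  have hbfl : ⌊b⌋ = ⌊a⌋ + m := by
    rw [hba, show ((m:ℕ):ℝ) = ((m:ℤ):ℝ) by push_cast; ring, Int.floor_add_intCast]
  have hbr : ((⌊a⌋:ℝ)) + m < b := by rw [hba]; linarith
  -- key angle identities
  have key1 : ψ + 2*π/μ * a = 3*π/2 := by rw [ha]; field_simp; ring
  have key2 : ψ + 2*π/μ * b = 5*π/2 := by rw [hb]; field_simp; ring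
  set klow : ℤ := ⌊a⌋ + 2 with hkl
  set kup : ℤ := ⌊a⌋ + m + 1 with hku
  -- positivity on the window
  have hpos : ∀ k : ℤ, klow ≤ k → k ≤ kup → 0 < g k := by
    intro k h1 h2
    have hk1 : a < (k:ℝ) - 1 := by
      have : ((⌊a⌋:ℝ)) + 2 ≤ (k:ℝ) := by exact_mod_cast h1
      linarith
    have hk2 : (k:ℝ) - 1 < b := by
      have : (k:ℝ) ≤ ((⌊a⌋:ℝ)) + m + 1 := by exact_mod_cast h2
      linarith
    have hl : 3*π/2 < ψ + 2*π/μ * ((k:ℝ) - 1) := by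
      have := mul_lt_mul_of_pos_left hk1 hc0
      linarith
    have hr : ψ + 2*π/μ * ((k:ℝ) - 1) < 5*π/2 := by
      have := mul_lt_mul_of_pos_left hk2 hc0
      linarith
    have : g k = Real.cos (ψ + 2*π/μ * ((k:ℝ) - 1) - 2*π) := by
      simp only [hg]; rw [Real.cos_sub_two_pi]
    rw [this]
    exact Real.cos_pos_of_mem_Ioo (Set.mem_Ioo.mpr ⟨by linarith, by linarith⟩)
  -- nonpositivity on the rest of the period
  have hneg : ∀ k : ℤ, kup < k → k ≤ klow - 1 + μ → g k ≤ 0 := by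
    intro k h1 h2
    have hk1 : b < (k:ℝ) - 1 := by
      have hk' : ⌊a⌋ + (m:ℤ) + 2 ≤ k := by omega
      have : ((⌊a⌋:ℝ)) + m + 2 ≤ (k:ℝ) := by exact_mod_cast hk'
      have hblt : b < ((⌊a⌋:ℝ)) + m + 1 := by rw [hba]; linarith
      linarith
    have hk2 : (k:ℝ) - 1 < a + μ := by
      have hk' : k ≤ ⌊a⌋ + 1 + (μ:ℤ) := by omega
      have : (k:ℝ) ≤ ((⌊a⌋:ℝ)) + 1 + (μ:ℝ) := by exact_mod_cast hk'
      linarith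
    have hl : 5*π/2 < ψ + 2*π/μ * ((k:ℝ) - 1) := by
      have := mul_lt_mul_of_pos_left hk1 hc0
      linarith
    have hr : ψ + 2*π/μ * ((k:ℝ) - 1) < 7*π/2 := by
      have := mul_lt_mul_of_pos_left hk2 hc0
      have hcmu : 2*π/μ * ((μ:ℝ)) = 2*π := by field_simp
      have : 2*π/μ * (a + μ) = 2*π/μ * a + 2*π := by rw [mul_add, hcmu]
      nlinarith [mul_lt_mul_of_pos_left hk2 hc0]
    have : g k = Real.cos (ψ + 2*π/μ * ((k:ℝ) - 1) - 2*π) := by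
      simp only [hg]; rw [Real.cos_sub_two_pi]
    rw [this]
    apply Real.cos_nonpos_of_pi_div_two_le_of_le <;> linarith
  -- convert the ℕ-sum to a ℤ-sum
  have hnat : ∑ k ∈ (Finset.Icc 2 (μ * W + 1) : Finset ℕ).filter
        (fun k : ℕ => 0 < Real.cos (ψ + 2 * π / μ * ((k : ℝ) - 1))),
      Real.cos (ψ + 2 * π / μ * ((k : ℝ) - 1))
      = ∑ k ∈ Finset.Ioc (1:ℤ) (1 + μ*W), h k := by
    rw [show (∑ k ∈ Finset.Ioc (1:ℤ) (1 + μ*W), h k)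
        = ∑ k ∈ (Finset.Ioc (1:ℤ) (1 + μ*W)).filter (fun k => 0 < g k), g k by
      rw [Finset.sum_filter]]
    apply Finset.sum_nbij' (i := fun (k:ℕ) => (k:ℤ)) (j := fun (k:ℤ) => k.toNat)
    · intro x hx
      simp only [Finset.mem_filter, Finset.mem_Icc] at hx
      simp only [Finset.mem_filter, Finset.mem_Ioc]
      refine ⟨⟨by exact_mod_cast hx.1.1, ?_⟩, ?_⟩
      · have := hx.1.2; push_cast; omega
      · simpa [hg] using hx.2
    · intro x hx
      simp only [Finset.mem_filter, Finset.mem_Ioc] at hx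
      simp only [Finset.mem_filter, Finset.mem_Icc]
      refine ⟨⟨by omega, by omega⟩, ?_⟩
      have hx1 : ((x.toNat:ℕ):ℝ) = (x:ℝ) := by
        have : (x.toNat : ℤ) = x := Int.toNat_of_nonneg (by omega)
        exact_mod_cast congrArg (fun z : ℤ => (z:ℝ)) this
      rw [hx1]; exact hx.2
    · intro x hx; simp
    · intro x hx
      simp only [Finset.mem_filter, Finset.mem_Ioc] at hx
      omega
    · intro x hx; simp [hg]
  have hcoe : (do let a ← Finset.Icc 2 (μ * W + 1); pure ((a:ℕ):ℝ))
      = Finset.image (fun a : ℕ => (a:ℝ)) (Finset.Icc 2 (μ * W + 1)) := by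
    ext x; simp [Bind.bind, Finset.instMonad]
  rw [hcoe, Finset.filter_image,
    Finset.sum_image (by intro x _ y _ hxy; exact Nat.cast_injective hxy), hnat]
  -- block decomposition and shifting
  rw [blocks_sum μ (by omega) h hhp W]
  congr 1
  have hshift : ∑ k ∈ Finset.Ioc (1:ℤ) (1+μ), h k
      = ∑ k ∈ Finset.Ioc (klow - 1) (klow - 1 + μ), h k := by
    rw [period_sum_const μ (by omega) h hhp 1, period_sum_const μ (by omega) h hhp (klow-1)]
  rw [hshift]
  have hsplit := my_sum_Ioc_consecutive h (show klow - 1 ≤ kup by omega)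
    (show kup ≤ klow - 1 + μ by omega)
  rw [← hsplit]
  have hzero : ∑ k ∈ Finset.Ioc kup (klow - 1 + μ), h k = 0 := by
    apply Finset.sum_eq_zero
    intro k hk
    simp only [Finset.mem_Ioc] at hk
    simp only [hh]
    rw [if_neg]
    exact not_lt.mpr (hneg k hk.1 hk.2)
  rw [hzero, add_zero]
  have hIcc : Finset.Ioc (klow - 1) kup = Finset.Icc klow kup := by
    ext x; simp only [Finset.mem_Ioc, Finset.mem_Icc]; omega
  rw [hIcc]
  have hidx1 : ⌈a⌉ + 1 = klow := by omega
  have hidx2 : ⌊b⌋ + 1 = kup := by omega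
  rw [hidx1, hidx2]
  apply Finset.sum_congr rfl
  intro k hk
  simp only [Finset.mem_Icc] at hk
  simp only [hh]
  rw [if_pos (hpos k hk.1 hk.2)]
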